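/- Let O be a complete discrete valuation ring with residue field of characteristic ℓ, and let H be the subgroup of SL_2(O) consisting of matrices congruent to an upper-triangular unipotent matrix ((1,*),(0,1)) modulo m^r, where m is the maximal ideal and r ≥ 1. Then the abelianization H^{ab} of H is a pro-ℓ group (in particular, every finite quotient of H^{ab} is an ℓ-group). -/

import Mathlib

open Finset in
lemma tri_pow_aux {R : Type*} [CommRing R] (a c d : R) (n : ℕ) :
    (!![a, 0; c, d] : Matrix (Fin 2) (Fin 2) R) ^ n
      = !![a ^ n, 0; c * ∑ i ∈ Finset.range n, a ^ i * d ^ (n - 1 - i), d ^ n] := by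
  induction n with
  | zero => simp [Matrix.one_fin_two]
  | succ n ih =>
      have key : c * a ^ n + d * (c * ∑ i ∈ Finset.range n, a ^ i * d ^ (n - 1 - i))
          = c * ∑ i ∈ Finset.range (n + 1), a ^ i * d ^ (n + 1 - 1 - i) := by
        simp only [Nat.add_sub_cancel]
        rw [Finset.sum_range_succ, Nat.sub_self, pow_zero, mul_one, mul_add, Finset.mul_sum,
          Finset.mul_sum, Finset.mul_sum, add_comm]
        congr 1
        refine Finset.sum_congr rfl fun i hi => ?_
        have h : n - i = n - 1 - i + 1 := by have := Finset.mem_range.mp hi; omega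
        rw [h, pow_succ']
        ring
      rw [pow_succ', ih, Matrix.mul_fin_two]
      refine Matrix.ext fun i j => ?_
      fin_cases i <;> fin_cases j <;> simp [pow_succ']
      · exact key

open Finset in
lemma uni_pow_aux {R : Type*} [CommRing R] (b : R) (n : ℕ) :
    (!![1, b; 0, 1] : Matrix (Fin 2) (Fin 2) R) ^ n = !![1, (n : R) * b; 0, 1] := by
  induction n with
  | zero => simp [Matrix.one_fin_two]
  | succ n ih =>
      rw [pow_succ, ih, Matrix.mul_fin_two]
      refine Matrix.ext fun i j => ?_
      fin_cases i <;> fin_cases j <;> simp [pow_succ'] <;> push_cast <;> ring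

/-- The abelianization of `H` is `p`-divisible for every prime `p ≠ ℓ`. -/
lemma abelianization_p_divisible
    {O : Type*} [CommRing O] [IsDomain O] [IsDiscreteValuationRing O]
    [IsAdicComplete (IsLocalRing.maximalIdeal O) O]
    (ℓ : ℕ) (hℓ : ℓ.Prime) [CharP (O ⧸ IsLocalRing.maximalIdeal O) ℓ]
    (r : ℕ) (hr : 1 ≤ r)
    (H : Subgroup (Matrix.SpecialLinearGroup (Fin 2) O))
    (hH : ∀ A : Matrix.SpecialLinearGroup (Fin 2) O,
      A ∈ H ↔ (A.1 1 0 ∈ (IsLocalRing.maximalIdeal O) ^ r ∧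
        A.1 0 0 - 1 ∈ (IsLocalRing.maximalIdeal O) ^ r ∧
        A.1 1 1 - 1 ∈ (IsLocalRing.maximalIdeal O) ^ r))
    (p : ℕ) (hp : p.Prime) (hpl : p ≠ ℓ)
    (g : Abelianization H) : ∃ h : Abelianization H, h ^ p = g := by
  classical
  set m := IsLocalRing.maximalIdeal O with hm
  set K := O ⧸ m
  obtain ⟨x, rfl⟩ := QuotientGroup.mk_surjective g
  -- notation for entries
  set M := (x : Matrix.SpecialLinearGroup (Fin 2) O).1 with hM
  set a := M 0 0 with ha
  set b := M 0 1 with hb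
  set c := M 1 0 with hc
  set d := M 1 1 with hd
  have hdet : a * d - b * c = 1 := by
    have := (x : Matrix.SpecialLinearGroup (Fin 2) O).2
    rwa [Matrix.det_fin_two] at this
  obtain ⟨hcm, ham, hdm⟩ := (hH x.1).mp x.2
  have hmr_le : m ^ r ≤ m := Ideal.pow_le_self (by omega)
  -- p is nonzero in the residue field
  have hpK : ((p : K) : K) ≠ 0 := by
    rw [Ne, CharP.cast_eq_zero_iff K ℓ]
    intro hdvd
    exact hpl ((Nat.prime_dvd_prime_iff_eq hℓ hp).mp hdvd).symm
  have unit_of : ∀ t : O, (Ideal.Quotient.mk m t ≠ 0) → ∃ t' : O, t * t' = 1 := by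
    intro t ht
    have : IsUnit t := by
      by_contra hcon
      exact ht (Ideal.Quotient.eq_zero_iff_mem.mpr hcon)
    exact isUnit_iff_exists_inv.mp this
  have mk_one_of : ∀ t : O, t - 1 ∈ m → Ideal.Quotient.mk m t = 1 := by
    intro t ht
    have : Ideal.Quotient.mk m (t - 1) = 0 := Ideal.Quotient.eq_zero_iff_mem.mpr ht
    rw [map_sub, map_one, sub_eq_zero] at this
    exact this
  -- p is a unit in O
  obtain ⟨q, hpq⟩ := unit_of (p : O) (by rwa [map_natCast])
  -- d is a unit in O
  obtain ⟨dinv, hdinv⟩ := unit_of d (by rw [mk_one_of d (hmr_le hdm)]; exact one_ne_zero)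
  have hdinvm : dinv - 1 ∈ m ^ r := by
    have : dinv - 1 = -(dinv * (d - 1)) := by linear_combination hdinv
    rw [this]
    exact neg_mem (Ideal.mul_mem_left _ _ hdm)
  -- Hensel: get α with α ^ p = dinv, α - 1 ∈ m
  obtain ⟨α, hαroot, hα1⟩ := HenselianRing.is_henselian (I := m)
    (Polynomial.X ^ p - Polynomial.C dinv)
    (Polynomial.monic_X_pow_sub_C dinv hp.ne_zero) 1
    (by
      simp only [Polynomial.eval_sub, Polynomial.eval_pow, Polynomial.eval_X, Polynomial.eval_C,
        one_pow]
      have : (1 : O) - dinv = -(dinv - 1) := by ring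
      rw [this]
      exact neg_mem (hmr_le hdinvm))
    (by
      have hder : ((Polynomial.X ^ p - Polynomial.C dinv).derivative.eval 1 : O) = (p : O) := by
        simp [Polynomial.derivative_pow]
      rw [hder]
      exact IsUnit.of_mul_eq_one (Ideal.Quotient.mk m q) (by rw [← map_mul, hpq, map_one]))
  have hαp : α ^ p = dinv := by
    have := hαroot
    simp only [Polynomial.IsRoot, Polynomial.eval_sub, Polynomial.eval_pow, Polynomial.eval_X,
      Polynomial.eval_C, sub_eq_zero] at this
    exact this
  have hmkα : Ideal.Quotient.mk m α = 1 := mk_one_of α hα1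
  -- α - 1 ∈ m ^ r  (geometric series trick)
  obtain ⟨tinv, htinv⟩ := unit_of (∑ i ∈ Finset.range p, α ^ i) (by
    rw [map_sum]
    have : ∀ i ∈ Finset.range p, (Ideal.Quotient.mk m) (α ^ i) = 1 := by
      intro i _
      rw [map_pow, hmkα, one_pow]
    rw [Finset.sum_congr rfl this, Finset.sum_const, Finset.card_range, nsmul_eq_mul, mul_one]
    exact hpK)
  have hαmr : α - 1 ∈ m ^ r := by
    have hgeo : (∑ i ∈ Finset.range p, α ^ i) * (α - 1) = dinv - 1 := by
      rw [geom_sum_mul, hαp]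
    have : α - 1 = tinv * (dinv - 1) := by linear_combination tinv * hgeo - (α - 1) * htinv
    rw [this]
    exact Ideal.mul_mem_left _ _ hdinvm
  -- the inverse of α
  set αinv := α ^ (p - 1) * d with hαinv
  have hααinv : α * αinv = 1 := by
    rw [hαinv, ← mul_assoc, ← pow_succ',
      show p - 1 + 1 = p from by have := hp.pos; omega, hαp]
    linear_combination hdinv
  have hαinvmr : αinv - 1 ∈ m ^ r := by
    have : αinv - 1 = -(αinv * (α - 1)) := by linear_combination hααinv
    rw [this]
    exact neg_mem (Ideal.mul_mem_left _ _ hαmr)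
  have hmkαinv : Ideal.Quotient.mk m αinv = 1 := mk_one_of αinv (hmr_le hαinvmr)
  -- the sum appearing in the p-th power of the lower triangular matrix, and its inverse
  set s := ∑ i ∈ Finset.range p, α ^ i * αinv ^ (p - 1 - i) with hs
  obtain ⟨sinv, hsinv⟩ := unit_of s (by
    rw [hs, map_sum]
    have : ∀ i ∈ Finset.range p, (Ideal.Quotient.mk m) (α ^ i * αinv ^ (p - 1 - i)) = 1 := by
      intro i _
      rw [map_mul, map_pow, map_pow, hmkα, hmkαinv, one_pow, one_pow, mul_one]
    rw [Finset.sum_congr rfl this, Finset.sum_const, Finset.card_range, nsmul_eq_mul, mul_one]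
    exact hpK)
  -- the two explicit matrices
  have hdetv : Matrix.det !![1, b * dinv * q; 0, 1] = 1 := by
    rw [Matrix.det_fin_two_of]; ring
  have hdetz : Matrix.det !![α, 0; c * sinv, αinv] = 1 := by
    rw [Matrix.det_fin_two_of]; linear_combination hααinv
  set v : Matrix.SpecialLinearGroup (Fin 2) O := ⟨!![1, b * dinv * q; 0, 1], hdetv⟩ with hv
  set z : Matrix.SpecialLinearGroup (Fin 2) O := ⟨!![α, 0; c * sinv, αinv], hdetz⟩ with hz
  have hvH : v ∈ H := by
    rw [hH]
    refine ⟨?_, ?_, ?_⟩ <;> simp [hv] <;> exact zero_mem _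
  have hzH : z ∈ H := by
    rw [hH]
    refine ⟨?_, ?_, ?_⟩ <;> simp [hz]
    · exact Ideal.mul_mem_right _ _ hcm
    · exact hαmr
    · exact hαinvmr
  -- the key matrix identity : x = v ^ p * z ^ p
  have hvp : (v ^ p).1 = !![1, b * dinv; 0, 1] := by
    rw [Matrix.SpecialLinearGroup.coe_pow, hv, uni_pow_aux]
    congr 1
    have : (p : O) * (b * dinv * q) = b * dinv * ((p : O) * q) := by ring
    rw [this, hpq, mul_one]
  have hzp : (z ^ p).1 = !![dinv, 0; c, d] := by
    rw [Matrix.SpecialLinearGroup.coe_pow, hz, tri_pow_aux]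
    rw [← hs]
    have h1 : c * sinv * s = c := by linear_combination c * hsinv
    have h2 : αinv ^ p = d := by
      rw [hαinv, mul_pow, ← pow_mul]
      have h3 : α ^ ((p - 1) * p) = dinv ^ (p - 1) := by
        rw [mul_comm (p-1) p, pow_mul, hαp]
      rw [h3]
      have h4 : dinv ^ (p - 1) * d ^ p = (dinv * d) ^ (p - 1) * d := by
        have hp1 : p = (p - 1) + 1 := by have := hp.pos; omega
        rw [mul_pow]
        nth_rewrite 2 [hp1]
        rw [pow_succ]
        ring
      rw [h4]
      have h5 : dinv * d = 1 := by linear_combination hdinv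
      rw [h5, one_pow, one_mul]
    rw [h1, hαp, h2]
  have hxvz : (x : Matrix.SpecialLinearGroup (Fin 2) O) = v ^ p * z ^ p := by
    apply Subtype.ext
    rw [Matrix.SpecialLinearGroup.coe_mul, hvp, hzp, Matrix.mul_fin_two]
    rw [← hM, Matrix.eta_fin_two M]
    refine Matrix.ext fun i j => ?_
    fin_cases i <;> fin_cases j <;> simp [← ha, ← hb, ← hc, ← hd]
    · linear_combination dinv * hdet - a * hdinv
    · linear_combination (-b) * hdinv
  -- conclude in the abelianization
  refine ⟨QuotientGroup.mk (⟨v, hvH⟩ : H) * QuotientGroup.mk (⟨z, hzH⟩ : H), ?_⟩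
  have hxH : x = (⟨v, hvH⟩ : H) ^ p * (⟨z, hzH⟩ : H) ^ p := by
    apply Subtype.ext
    rw [hxvz]
    rfl
  rw [hxH]
  exact (mul_pow (_ : Abelianization H) _ p).trans rfl

/-- Let `O` be a complete discrete valuation ring with residue field of characteristic `ℓ`, and
let `H ⊆ SL₂(O)` be the subgroup of matrices congruent modulo `m^r` (`r ≥ 1`) to an
upper-triangular unipotent matrix. Then every finite quotient of the abelianization of `H` is an
`ℓ`-group. -/
theorem abelianization_congruence_unipotent_is_pro_ell
    {O : Type*} [CommRing O] [IsDomain O] [IsDiscreteValuationRing O]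
    [IsAdicComplete (IsLocalRing.maximalIdeal O) O]
    (ℓ : ℕ) (hℓ : ℓ.Prime) [CharP (O ⧸ IsLocalRing.maximalIdeal O) ℓ]
    (r : ℕ) (hr : 1 ≤ r)
    (H : Subgroup (Matrix.SpecialLinearGroup (Fin 2) O))
    (hH : ∀ A : Matrix.SpecialLinearGroup (Fin 2) O,
      A ∈ H ↔ (A.1 1 0 ∈ (IsLocalRing.maximalIdeal O) ^ r ∧
        A.1 0 0 - 1 ∈ (IsLocalRing.maximalIdeal O) ^ r ∧
        A.1 1 1 - 1 ∈ (IsLocalRing.maximalIdeal O) ^ r))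
    (N : Subgroup (Abelianization H)) (hfin : Finite (Abelianization H ⧸ N)) :
    IsPGroup ℓ (Abelianization H ⧸ N) := by
  -- the quotient is p-divisible for every prime p ≠ ℓ
  have hdiv : ∀ p : ℕ, p.Prime → p ≠ ℓ →
      ∀ g : Abelianization H ⧸ N, ∃ h, h ^ p = g := by
    intro p hp hpl g
    obtain ⟨y, rfl⟩ := QuotientGroup.mk_surjective g
    obtain ⟨h, hh⟩ := abelianization_p_divisible ℓ hℓ r hr H hH p hp hpl y
    exact ⟨QuotientGroup.mk h, by rw [← hh]; rfl⟩
  intro g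
  set n := orderOf g with hn
  have hn0 : n ≠ 0 := (orderOf_pos g).ne'
  have hfac : ∀ {p : ℕ}, p.Prime → p ∣ n → p = ℓ := by
    intro p hp hpn
    by_contra hpl
    -- the p-th power map is a surjective endomorphism of a finite group, hence injective
    have hsurj : Function.Surjective (fun x : Abelianization H ⧸ N => x ^ p) :=
      fun y => hdiv p hp hpl y
    have hinj : Function.Injective (fun x : Abelianization H ⧸ N => x ^ p) :=
      Finite.injective_iff_surjective.mpr hsurj
    -- but g ^ (n / p) is a nontrivial element with (g ^ (n/p)) ^ p = 1
    have hne : g ^ (n / p) ≠ 1 := by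
      intro h1
      have hdvd : n ∣ n / p := orderOf_dvd_of_pow_eq_one h1
      have h2 : 0 < n / p := Nat.div_pos (Nat.le_of_dvd (Nat.pos_of_ne_zero hn0) hpn) hp.pos
      have h3 : n / p < n := Nat.div_lt_self (Nat.pos_of_ne_zero hn0) hp.one_lt
      exact absurd (Nat.le_of_dvd h2 hdvd) (by omega)
    have hpow : (g ^ (n / p)) ^ p = 1 := by
      rw [← pow_mul, Nat.div_mul_cancel hpn, hn, pow_orderOf_eq_one]
    exact hne (hinj (by simpa using hpow))
  have heq : n = ℓ ^ n.primeFactorsList.length :=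
    Nat.eq_prime_pow_of_unique_prime_dvd hn0 fun hq hqn => hfac hq hqn
  exact ⟨n.primeFactorsList.length, by rw [← heq]; exact pow_orderOf_eq_one g⟩
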